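/- For all natural numbers n ≥ 3, li^{-1}(n) < 2 n log n, equivalently li(2 n log n) > n. -/

import Mathlib

open Filter

/-- Principal value logarithmic integral from 0: `li x = p.v. ∫ t in 0..x, dt / log t`. -/
noncomputable def li (x : ℝ) : ℝ :=
  limUnder (nhdsWithin 0 (Set.Ioi (0:ℝ))) fun ε : ℝ =>
    (∫ t in (0:ℝ)..(1 - ε), 1 / Real.log t) + ∫ t in (1 + ε)..x, 1 / Real.log t

/-- Inverse of the logarithmic integral `li` (on its increasing branch). -/
noncomputable def liInv : ℝ → ℝ := Function.invFun li

lemma psi_nonneg : ∀ u ∈ Set.Ico (0:ℝ) 1,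
    0 ≤ 2*u + (1-u)*Real.log (1-u) - (1+u)*Real.log (1+u) := by
  set ψ : ℝ → ℝ := fun u => 2*u + (1-u)*Real.log (1-u) - (1+u)*Real.log (1+u) with hψdef
  have hd : ∀ u ∈ Set.Ioo (0:ℝ) 1,
      HasDerivAt ψ (-(Real.log (1-u) + Real.log (1+u))) u := by
    intro u hu
    have h1 : (0:ℝ) < 1 - u := by linarith [hu.2]
    have h2 : (0:ℝ) < 1 + u := by linarith [hu.1]
    have d1 : HasDerivAt (fun u : ℝ => 1 - u) (-1) u := by
      simpa using (hasDerivAt_id u).const_sub 1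
    have d2 : HasDerivAt (fun u : ℝ => 1 + u) 1 u := by
      simpa using (hasDerivAt_id u).const_add 1
    have dl1 : HasDerivAt (fun u : ℝ => Real.log (1 - u)) (-(1-u)⁻¹) u := by
      simpa [Function.comp_def] using (Real.hasDerivAt_log h1.ne').comp u d1
    have dl2 : HasDerivAt (fun u : ℝ => Real.log (1 + u)) ((1+u)⁻¹) u := by
      simpa [Function.comp_def] using (Real.hasDerivAt_log h2.ne').comp u d2
    have hmain := (((hasDerivAt_id u).const_mul 2).add (d1.mul dl1)).sub (d2.mul dl2)
    refine hmain.congr_deriv ?_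
    field_simp
    ring
  have mono : MonotoneOn ψ (Set.Ico (0:ℝ) 1) := by
    apply monotoneOn_of_deriv_nonneg (convex_Ico 0 1)
    · have c1 : ContinuousOn (fun u:ℝ => Real.log (1-u)) (Set.Ico (0:ℝ) 1) :=
        ContinuousOn.log (by fun_prop)
          (fun x hx => by intro h; rw [sub_eq_zero] at h; linarith [hx.2])
      have c2 : ContinuousOn (fun u:ℝ => Real.log (1+u)) (Set.Ico (0:ℝ) 1) :=
        ContinuousOn.log (by fun_prop) (fun x hx => by have := hx.1; intro h; linarith)
      exact (((continuous_const.mul continuous_id).continuousOn).add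
        ((by fun_prop : ContinuousOn (fun u:ℝ => 1-u) (Set.Ico (0:ℝ) 1)).mul c1)).sub
        (((by fun_prop : ContinuousOn (fun u:ℝ => 1+u) (Set.Ico (0:ℝ) 1)).mul c2))
    · intro x hx
      rw [interior_Ico] at hx
      exact (hd x hx).differentiableAt.differentiableWithinAt
    · intro x hx
      rw [interior_Ico] at hx
      rw [(hd x hx).deriv]
      have h1 : (0:ℝ) < 1 - x := by linarith [hx.2]
      have h2 : (0:ℝ) < 1 + x := by linarith [hx.1]
      have : Real.log (1-x) + Real.log (1+x) = Real.log ((1-x)*(1+x)) :=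
        (Real.log_mul h1.ne' h2.ne').symm
      rw [this]
      have : Real.log ((1-x)*(1+x)) ≤ 0 := Real.log_nonpos (by nlinarith) (by nlinarith [sq_nonneg x])
      linarith
  intro u hu
  have h0 : (0:ℝ) ∈ Set.Ico (0:ℝ) 1 := ⟨le_refl _, one_pos⟩
  have := mono h0 hu hu.1
  simpa [hψdef] using this

lemma G_nonneg : ∀ u ∈ Set.Ico (0:ℝ) 1,
    0 ≤ -Real.log (1-u) - Real.log (1+u) + Real.log (1+u) * Real.log (1-u) := by
  set G : ℝ → ℝ := fun u => -Real.log (1-u) - Real.log (1+u) + Real.log (1+u) * Real.log (1-u)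
    with hGdef
  have hd : ∀ u ∈ Set.Ioo (0:ℝ) 1,
      HasDerivAt G ((1-u)⁻¹ - (1+u)⁻¹ +
        ((1+u)⁻¹ * Real.log (1-u) + Real.log (1+u) * (-(1-u)⁻¹))) u := by
    intro u hu
    have h1 : (0:ℝ) < 1 - u := by linarith [hu.2]
    have h2 : (0:ℝ) < 1 + u := by linarith [hu.1]
    have d1 : HasDerivAt (fun u : ℝ => 1 - u) (-1) u := by
      simpa using (hasDerivAt_id u).const_sub 1
    have d2 : HasDerivAt (fun u : ℝ => 1 + u) 1 u := by
      simpa using (hasDerivAt_id u).const_add 1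
    have dl1 : HasDerivAt (fun u : ℝ => Real.log (1 - u)) (-(1-u)⁻¹) u := by
      simpa [Function.comp_def] using (Real.hasDerivAt_log h1.ne').comp u d1
    have dl2 : HasDerivAt (fun u : ℝ => Real.log (1 + u)) ((1+u)⁻¹) u := by
      simpa [Function.comp_def] using (Real.hasDerivAt_log h2.ne').comp u d2
    have hmain := ((dl1.neg.sub dl2).add (dl2.mul dl1))
    refine hmain.congr_deriv ?_
    ring
  have mono : MonotoneOn G (Set.Ico (0:ℝ) 1) := by
    apply monotoneOn_of_deriv_nonneg (convex_Ico 0 1)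
    · have c1 : ContinuousOn (fun u:ℝ => Real.log (1-u)) (Set.Ico (0:ℝ) 1) :=
        ContinuousOn.log (by fun_prop)
          (fun x hx => by intro h; rw [sub_eq_zero] at h; linarith [hx.2])
      have c2 : ContinuousOn (fun u:ℝ => Real.log (1+u)) (Set.Ico (0:ℝ) 1) :=
        ContinuousOn.log (by fun_prop) (fun x hx => by have := hx.1; intro h; linarith)
      exact (c1.neg.sub c2).add (c2.mul c1)
    · intro x hx
      rw [interior_Ico] at hx
      exact (hd x hx).differentiableAt.differentiableWithinAt
    · intro x hx
      rw [interior_Ico] at hx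
      rw [(hd x hx).deriv]
      have h1 : (0:ℝ) < 1 - x := by linarith [hx.2]
      have h2 : (0:ℝ) < 1 + x := by linarith [hx.1]
      have key := psi_nonneg x ⟨hx.1.le, hx.2⟩
      have heq : (1-x)⁻¹ - (1+x)⁻¹ +
          ((1+x)⁻¹ * Real.log (1-x) + Real.log (1+x) * (-(1-x)⁻¹))
          = (2*x + (1-x)*Real.log (1-x) - (1+x)*Real.log (1+x)) / ((1-x)*(1+x)) := by
        field_simp
        ring
      rw [heq]
      exact div_nonneg key (by positivity)
  intro u hu
  have h0 : (0:ℝ) ∈ Set.Ico (0:ℝ) 1 := ⟨le_refl _, one_pos⟩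
  have := mono h0 hu hu.1
  simpa [hGdef] using this

noncomputable def fI (s : ℝ) : ℝ := 1 / Real.log s + 1 / Real.log (2 - s)

lemma fI_repr {s : ℝ} (hs : s ∈ Set.Ioo (1:ℝ) 2) :
    0 < Real.log s ∧ 0 < -Real.log (2-s) ∧
    fI s = (-Real.log (2-s) - Real.log s) / (Real.log s * (-Real.log (2-s))) := by
  have ha : 0 < Real.log s := Real.log_pos hs.1
  have hlt : Real.log (2-s) < 0 := Real.log_neg (by linarith [hs.2]) (by linarith [hs.1])
  refine ⟨ha, by linarith, ?_⟩
  have hne1 : Real.log s ≠ 0 := ha.ne'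
  have hne2 : Real.log (2-s) ≠ 0 := hlt.ne
  rw [fI]
  field_simp
  ring

lemma fI_ge_one : ∀ s ∈ Set.Ioc (1:ℝ) 2, 1 ≤ fI s := by
  intro s hs
  rcases eq_or_lt_of_le hs.2 with h2 | h2
  · rw [h2, fI]
    norm_num
    rw [← one_div, le_div_iff₀ (Real.log_pos one_lt_two)]
    linarith [Real.log_two_lt_d9]
  · obtain ⟨ha, hb, hrepr⟩ := fI_repr ⟨hs.1, h2⟩
    set a := Real.log s
    set b := -Real.log (2-s)
    have hu : s - 1 ∈ Set.Ico (0:ℝ) 1 := ⟨by linarith [hs.1], by linarith [h2]⟩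
    have hG := G_nonneg (s-1) hu
    have e1 : 1 + (s-1) = s := by ring
    have e2 : 1 - (s-1) = 2 - s := by ring
    rw [e1, e2] at hG
    -- hG : 0 ≤ -log(2-s) - log s + log s * log (2-s) = b - a - a*b
    have hkey : a * b ≤ b - a := by
      have : Real.log (2-s) = -b := by simp [b]
      rw [this] at hG
      nlinarith [hG]
    rw [hrepr, le_div_iff₀ (by positivity)]
    linarith

lemma fI_le_three : ∀ s ∈ Set.Ioc (1:ℝ) 2, fI s ≤ 3 := by
  intro s hs
  rcases eq_or_lt_of_le hs.2 with h2 | h2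
  · rw [h2, fI]
    norm_num
    rw [← one_div, div_le_iff₀ (Real.log_pos one_lt_two)]
    linarith [Real.log_two_gt_d9]
  · obtain ⟨ha, hb, hrepr⟩ := fI_repr ⟨hs.1, h2⟩
    set a := Real.log s with hadef
    set b := -Real.log (2-s) with hbdef
    rcases le_or_gt (3/2) s with hs32 | hs32
    · -- 1/a ≤ 3, second term ≤ 0
      have h13 : (1:ℝ)/3 ≤ a := by
        have := Real.one_sub_inv_le_log_of_pos (show (0:ℝ) < s by linarith)
        have hinv : s⁻¹ ≤ 2/3 := by
          rw [inv_le_comm₀ (by linarith) (by norm_num)]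
          linarith
        simp only [hadef]
        linarith
      have h1 : 1/a ≤ 3 := by
        rw [div_le_iff₀ ha]
        linarith [mul_le_mul_of_nonneg_right h13 (by norm_num : (0:ℝ) ≤ 3)]
      have h2' : 1 / Real.log (2-s) ≤ 0 := by
        apply div_nonpos_of_nonneg_of_nonpos <;> [norm_num; linarith [hb]]
      calc fI s = 1/Real.log s + 1/Real.log (2-s) := rfl
        _ ≤ 3 + 0 := add_le_add h1 h2'
        _ = 3 := by ring
    · -- s < 3/2
      set u := s - 1 with hudef
      have hu0 : 0 < u := by simp [hudef]; linarith [hs.1]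
      have hu2 : u < 1/2 := by simp [hudef]; linarith
      have hy : 0 < (2-s)*s := by nlinarith
      -- b - a ≤ u^2 / ((2-s)*s)
      have hba : b - a ≤ u^2 / ((2-s)*s) := by
        have hlog : Real.log ((2-s)*s) = Real.log (2-s) + Real.log s :=
          Real.log_mul (by linarith [h2]) (by linarith [hs.1])
        have hkey := Real.one_sub_inv_le_log_of_pos hy
        rw [hlog] at hkey
        have e : ((2-s)*s)⁻¹ - 1 = u^2 / ((2-s)*s) := by
          rw [hudef]
          have h2s : (2:ℝ) - s ≠ 0 := (by linarith : (0:ℝ) < 2 - s).ne'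
          have hs0 : s ≠ 0 := (by linarith [hs.1] : (0:ℝ) < s).ne'
          field_simp
          ring
        simp only [hbdef, hadef]
        rw [← e]
        linarith
      have hsp : (0:ℝ) < s := by linarith [hs.1]
      have hau : u/s ≤ a := by
        have hkey := Real.one_sub_inv_le_log_of_pos hsp
        have e : 1 - s⁻¹ = u/s := by
          rw [hudef]
          field_simp
        simp only [hadef]
        linarith [e ▸ hkey]
      have hbu : u ≤ b := by
        have hkey := Real.log_le_sub_one_of_pos (show (0:ℝ) < 2 - s by linarith [h2])
        simp only [hbdef, hudef]
        linarith
      have hab : u^2/s ≤ a*b := by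
        have := mul_le_mul hau hbu hu0.le ha.le
        have e : u/s*u = u^2/s := by ring
        linarith [e ▸ this]
      have hchain : (b-a)/(a*b) ≤ (u^2/((2-s)*s))/(u^2/s) := by
        apply div_le_div₀ (by positivity) hba (by positivity) hab
      have e2 : (u^2/((2-s)*s))/(u^2/s) = 1/(2-s) := by
        have h1 : (2-s) ≠ 0 := by intro h; rw [sub_eq_zero] at h; linarith
        field_simp
      have e3 : 1/(2-s) ≤ 3 := by
        rw [div_le_iff₀ (show (0:ℝ) < 2-s by linarith [h2])]
        linarith
      rw [hrepr]
      calc (b-a)/(a*b) ≤ (u^2/((2-s)*s))/(u^2/s) := hchain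
        _ = 1/(2-s) := e2
        _ ≤ 3 := e3

open MeasureTheory in
lemma fI_intOn : IntegrableOn fI (Set.Ioc 1 2) := by
  have hmeas : Measurable fI := by
    unfold fI
    exact (measurable_const.div Real.measurable_log).add
      (measurable_const.div (Real.measurable_log.comp (measurable_const.sub measurable_id)))
  apply MeasureTheory.Integrable.mono' (g := fun _ => (3:ℝ))
    ((MeasureTheory.integrableOn_const_iff).mpr (Or.inr (by simp)))
    hmeas.aestronglyMeasurable
  rw [MeasureTheory.ae_restrict_iff' measurableSet_Ioc]
  filter_upwards with x hx
  rw [Real.norm_eq_abs, abs_le]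
  exact ⟨by linarith [fI_ge_one x hx], fI_le_three x hx⟩

lemma fI_ii : IntervalIntegrable fI MeasureTheory.volume 1 2 :=
  (intervalIntegrable_iff_integrableOn_Ioc_of_le one_le_two).mpr fI_intOn

lemma one_le_liI : 1 ≤ ∫ s in (1:ℝ)..2, fI s := by
  rw [intervalIntegral.integral_of_le one_le_two]
  have h1 : (∫ _ in Set.Ioc (1:ℝ) 2, (1:ℝ)) = 1 := by
    rw [MeasureTheory.setIntegral_const]
    simp [Real.volume_Ioc]
    norm_num
  refine le_trans (le_of_eq h1.symm) ?_
  exact MeasureTheory.setIntegral_mono_on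
    ((MeasureTheory.integrableOn_const_iff).mpr (Or.inr (by simp)))
    fI_intOn measurableSet_Ioc fI_ge_one

lemma liI_le_three : (∫ s in (1:ℝ)..2, fI s) ≤ 3 := by
  rw [intervalIntegral.integral_of_le one_le_two]
  have h1 : (∫ _ in Set.Ioc (1:ℝ) 2, (3:ℝ)) = 3 := by
    rw [MeasureTheory.setIntegral_const]
    simp [Real.volume_Ioc]
    norm_num
  refine le_trans ?_ (le_of_eq h1)
  exact MeasureTheory.setIntegral_mono_on fI_intOn
    ((MeasureTheory.integrableOn_const_iff).mpr (Or.inr (by simp)))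
    measurableSet_Ioc fI_le_three

lemma g_contOn {A : Set ℝ} (h : ∀ t ∈ A, 1 < t) :
    ContinuousOn (fun t => 1/Real.log t) A := by
  apply ContinuousOn.div continuousOn_const
  · exact fun t ht =>
      (Real.continuousAt_log (ne_of_gt (lt_trans zero_lt_one (h t ht)))).continuousWithinAt
  · exact fun t ht => (Real.log_pos (h t ht)).ne'
lemma li_eq {x : ℝ} (hx : 2 ≤ x) :
    li x = (∫ s in (1:ℝ)..2, fI s) + ∫ t in (2:ℝ)..x, 1 / Real.log t := by
  apply Filter.Tendsto.limUnder_eq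
  have hmem : Set.Ioo (0:ℝ) 1 ∈ nhdsWithin 0 (Set.Ioi (0:ℝ)) :=
    Ioo_mem_nhdsGT_of_mem ⟨le_refl _, one_pos⟩
  have hgb : IntervalIntegrable (fun t => 1/Real.log t) MeasureTheory.volume 2 x := by
    apply (g_contOn ?_).intervalIntegrable
    intro t ht
    rw [Set.uIcc_of_le hx] at ht
    linarith [ht.1]
  have heq : ∀ ε ∈ Set.Ioo (0:ℝ) 1,
      (∫ s in (1+ε)..2, fI s) + (∫ t in (2:ℝ)..x, 1 / Real.log t)
      = (∫ t in (0:ℝ)..(1 - ε), 1 / Real.log t) + ∫ t in (1 + ε)..x, 1 / Real.log t := by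
    intro ε hε
    obtain ⟨hε0, hε1⟩ := hε
    have hga : IntervalIntegrable (fun t => 1/Real.log t) MeasureTheory.volume (1+ε) 2 := by
      apply (g_contOn ?_).intervalIntegrable
      intro t ht
      rw [Set.uIcc_of_le (by linarith)] at ht
      linarith [ht.1]
    have hfimage : IntervalIntegrable fI MeasureTheory.volume (1+ε) 2 := by
      rw [intervalIntegrable_iff_integrableOn_Ioc_of_le (by linarith)]
      exact fI_intOn.mono_set (Set.Ioc_subset_Ioc_left (by linarith))
    have h2s : IntervalIntegrable (fun s => 1/Real.log (2-s)) MeasureTheory.volume (1+ε) 2 := by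
      have hfn : (fun s => fI s - 1/Real.log s) = fun s => 1/Real.log (2-s) := by
        funext s; simp [fI]
      exact hfn ▸ hfimage.sub hga
    have hsub : (∫ t in (0:ℝ)..(1-ε), 1/Real.log t) = ∫ s in (1+ε)..2, 1/Real.log (2-s) := by
      have h := intervalIntegral.integral_comp_sub_left (a := 1+ε) (b := 2)
        (fun t => 1/Real.log t) 2
      rw [show (2:ℝ)-2 = 0 by norm_num, show (2:ℝ)-(1+ε) = 1-ε by ring] at h
      exact h.symm
    have hsplit : (∫ t in (1+ε)..x, 1/Real.log t)
        = (∫ t in (1+ε)..2, 1/Real.log t) + ∫ t in (2:ℝ)..x, 1/Real.log t :=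
      (intervalIntegral.integral_add_adjacent_intervals hga hgb).symm
    have hadd : (∫ s in (1+ε)..2, fI s)
        = (∫ s in (1+ε)..2, 1/Real.log (2-s)) + ∫ t in (1+ε)..2, 1/Real.log t := by
      rw [← intervalIntegral.integral_add h2s hga]
      apply intervalIntegral.integral_congr
      intro s _
      simp [fI]
      ring
    rw [hadd, hsub, hsplit]
    ring
  have htail : Filter.Tendsto (fun ε => ∫ s in (1:ℝ)..(1+ε), fI s)
      (nhdsWithin 0 (Set.Ioi (0:ℝ))) (nhds 0) := by
    apply squeeze_zero_norm' (a := fun ε => 3 * ε)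
    · filter_upwards [hmem] with ε hε
      have hb : ∀ s ∈ Set.uIoc (1:ℝ) (1+ε), ‖fI s‖ ≤ 3 := by
        intro s hs
        rw [Set.uIoc_of_le (by linarith [hε.1.le] : (1:ℝ) ≤ 1+ε)] at hs
        have hs' : s ∈ Set.Ioc (1:ℝ) 2 := ⟨hs.1, le_trans hs.2 (by linarith [hε.2.le])⟩
        rw [Real.norm_eq_abs, abs_le]
        exact ⟨by linarith [fI_ge_one s hs'], fI_le_three s hs'⟩
      have h3 := intervalIntegral.norm_integral_le_of_norm_le_const hb
      have he : |1 + ε - 1| = ε := by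
        rw [show (1:ℝ) + ε - 1 = ε by ring, abs_of_nonneg hε.1.le]
      rw [he] at h3
      exact h3
    · have h4 : Filter.Tendsto (fun ε : ℝ => 3 * ε) (nhds 0) (nhds 0) := by
        simpa [Pi.mul_def] using (continuous_const.mul continuous_id).tendsto (0:ℝ)
      exact h4.mono_left nhdsWithin_le_nhds
  have hIten : Filter.Tendsto (fun ε => ∫ s in (1+ε)..2, fI s)
      (nhdsWithin 0 (Set.Ioi (0:ℝ))) (nhds (∫ s in (1:ℝ)..2, fI s)) := by
    have heq2 : ∀ ε ∈ Set.Ioo (0:ℝ) 1,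
        (∫ s in (1:ℝ)..2, fI s) - (∫ s in (1:ℝ)..(1+ε), fI s) = ∫ s in (1+ε)..2, fI s := by
      intro ε hε
      have h1 : IntervalIntegrable fI MeasureTheory.volume 1 (1+ε) := by
        rw [intervalIntegrable_iff_integrableOn_Ioc_of_le (by linarith [hε.1.le])]
        exact fI_intOn.mono_set (Set.Ioc_subset_Ioc_right (by linarith [hε.2.le]))
      have h2 : IntervalIntegrable fI MeasureTheory.volume (1+ε) 2 := by
        rw [intervalIntegrable_iff_integrableOn_Ioc_of_le (by linarith [hε.2.le])]
        exact fI_intOn.mono_set (Set.Ioc_subset_Ioc_left (by linarith [hε.1]))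
      have h5 := intervalIntegral.integral_add_adjacent_intervals h1 h2
      linarith
    apply Filter.Tendsto.congr'
      (f₁ := fun ε => (∫ s in (1:ℝ)..2, fI s) - ∫ s in (1:ℝ)..(1+ε), fI s)
    · filter_upwards [hmem] with ε hε using heq2 ε hε
    · simpa using (tendsto_const_nhds.sub htail)
  apply Filter.Tendsto.congr' ?_ (hIten.add_const _)
  filter_upwards [hmem] with ε hε using heq ε hε

lemma intlog_ii {a b : ℝ} (ha : 2 ≤ a) (hab : a ≤ b) :
    IntervalIntegrable (fun t => 1/Real.log t) MeasureTheory.volume a b := by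
  apply (g_contOn ?_).intervalIntegrable
  intro t ht
  rw [Set.uIcc_of_le hab] at ht
  linarith [ht.1]

lemma li_mono {x y : ℝ} (hx : 2 ≤ x) (hxy : x ≤ y) : li x ≤ li y := by
  rw [li_eq hx, li_eq (le_trans hx hxy)]
  have h1 := intlog_ii (le_refl 2) hx
  have h2 := intlog_ii hx hxy
  have hadd := intervalIntegral.integral_add_adjacent_intervals h1 h2
  have hnn : 0 ≤ ∫ t in x..y, 1/Real.log t := by
    apply intervalIntegral.integral_nonneg hxy
    intro t ht
    have : 0 < Real.log t := Real.log_pos (by linarith [ht.1])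
    positivity
  linarith

lemma li_lowerbound {x : ℝ} (hx : 2 ≤ x) :
    (x-2)/Real.log x ≤ ∫ t in (2:ℝ)..x, 1/Real.log t := by
  have hlogx : 0 < Real.log x := Real.log_pos (by linarith)
  have hmono : ∀ t ∈ Set.Icc (2:ℝ) x, 1/Real.log x ≤ 1/Real.log t := by
    intro t ht
    have h1 : 0 < Real.log t := Real.log_pos (by linarith [ht.1])
    apply one_div_le_one_div_of_le h1
    exact (Real.log_le_log_iff (by linarith [ht.1]) (by linarith)).mpr ht.2
  have hconst : (∫ _ in (2:ℝ)..x, 1/Real.log x) = (x - 2) * (1/Real.log x) := by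
    simp
  calc (x-2)/Real.log x = ∫ _ in (2:ℝ)..x, 1/Real.log x := by rw [hconst]; ring
    _ ≤ ∫ t in (2:ℝ)..x, 1/Real.log t :=
      intervalIntegral.integral_mono_on hx
        intervalIntegrable_const (intlog_ii (le_refl 2) hx) hmono

theorem liInv_lt (n : ℕ) (hn : 3 ≤ n) :
    liInv n < 2 * n * Real.log n ∧ (n : ℝ) < li (2 * n * Real.log n) := by
  have hn3 : (3:ℝ) ≤ (n:ℝ) := by exact_mod_cast hn
  have hlogn : 1 ≤ Real.log n := by
    have he : Real.exp 1 ≤ (n:ℝ) :=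
      le_trans (le_of_lt (lt_trans Real.exp_one_lt_d9 (by norm_num))) hn3
    calc (1:ℝ) = Real.log (Real.exp 1) := (Real.log_exp 1).symm
      _ ≤ Real.log n := (Real.log_le_log_iff (Real.exp_pos 1) (by linarith)).mpr he
  set x₀ := 2 * (n:ℝ) * Real.log n with hx₀def
  have hx₀6 : 6 ≤ x₀ := by nlinarith
  have h2x₀ : (2:ℝ) ≤ x₀ := by linarith
  have hlogx₀pos : 0 < Real.log x₀ := Real.log_pos (by linarith)
  have hl2a := Real.log_two_lt_d9
  have hl2b := Real.log_two_gt_d9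
  have hlogx₀ : Real.log x₀ ≤ Real.log 2 + 2*Real.log n - 1 := by
    have hnne : (n:ℝ) ≠ 0 := by positivity
    have hlne : Real.log n ≠ 0 := by linarith
    have hsplit : Real.log x₀ = Real.log 2 + Real.log n + Real.log (Real.log n) := by
      rw [hx₀def, Real.log_mul (by positivity) hlne, Real.log_mul two_ne_zero hnne]
    have h2 : Real.log (Real.log n) ≤ Real.log n - 1 :=
      Real.log_le_sub_one_of_pos (by linarith)
    linarith
  have hmain : ((n:ℝ)-1) * Real.log x₀ < x₀ - 2 := by
    have h1 : ((n:ℝ)-1) * Real.log x₀ ≤ ((n:ℝ)-1)*(Real.log 2 + 2*Real.log n - 1) :=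
      mul_le_mul_of_nonneg_left hlogx₀ (by linarith)
    nlinarith [mul_nonneg (show (0:ℝ) ≤ (n:ℝ) - 3 by linarith)
      (show (0:ℝ) ≤ 1 - Real.log 2 by linarith)]
  have hli : (n:ℝ) < li x₀ := by
    rw [li_eq h2x₀]
    have h1 := li_lowerbound h2x₀
    have h2 : (n:ℝ) - 1 < (x₀-2)/Real.log x₀ := by
      rw [lt_div_iff₀ hlogx₀pos]
      exact hmain
    linarith [one_le_liI]
  refine ⟨?_, hli⟩
  have hli2 : li 2 = ∫ s in (1:ℝ)..2, fI s := by
    rw [li_eq (le_refl 2)]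
    simp
  have hcont : ContinuousOn li (Set.Icc 2 x₀) := by
    have hint : MeasureTheory.IntegrableOn (fun t => 1/Real.log t)
        (Set.uIcc (2:ℝ) x₀) MeasureTheory.volume := by
      apply ContinuousOn.integrableOn_uIcc
      apply g_contOn
      intro t ht
      rw [Set.uIcc_of_le h2x₀] at ht
      linarith [ht.1]
    have hprim := intervalIntegral.continuousOn_primitive_interval hint
    rw [Set.uIcc_of_le h2x₀] at hprim
    exact (continuousOn_const.add hprim).congr (fun y hy => li_eq hy.1)
  have hIvt := intermediate_value_Icc h2x₀ hcont
  have hmemn : (n:ℝ) ∈ Set.Icc (li 2) (li x₀) := by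
    constructor
    · rw [hli2]; linarith [liI_le_three]
    · exact hli.le
  obtain ⟨y, _, hyn⟩ := hIvt hmemn
  have hinv : li (liInv n) = n := Function.invFun_eq ⟨y, hyn⟩
  by_contra hcon
  push_neg at hcon
  have := li_mono h2x₀ hcon
  rw [hinv] at this
  linarith
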